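/- For every α > 1 and every L > 0, there exists λ > 0 such that the function f_λ (equal to 0 for x ≤ 0 and exp(-λ√2·x^{-1/(α-1)}) for x > 0) satisfies Σ_{k∈ℕ} (L^{kα}/(k!)^α)·sup_{x∈ℝ}|f_λ^{(k)}(x)| < ∞; that is, f_λ is a Gevrey-α function on ℝ. -/

import Mathlib

open Real Filter Finset

namespace GevreyAux

noncomputable def aa (p : ℝ) : ℕ → ℕ → ℝ
  | 0, 0 => 1
  | 0, _+1 => 0
  | k+1, 0 => -(k:ℝ) * aa p k 0
  | k+1, j+1 => (-(((j:ℕ)+1 : ℝ) * p + k)) * aa p k (j+1) + p * aa p k j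

lemma aa_eq_zero (p : ℝ) : ∀ k j, k < j → aa p k j = 0 := by
  intro k
  induction k with
  | zero => intro j hj; match j, hj with
    | j+1, _ => rfl
  | succ k ih =>
    intro j hj
    match j, hj with
    | j+1, hj =>
      have h1 : aa p k (j+1) = 0 := ih _ (by omega)
      have h2 : aa p k j = 0 := ih _ (by omega)
      simp [aa, h1, h2]

noncomputable def FF (c p : ℝ) (k : ℕ) (x : ℝ) : ℝ :=
  (∑ j ∈ Finset.range (k+1), aa p k j * c^j * x ^ (-((j:ℝ)*p) - k)) * Real.exp (-c * x ^ (-p))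

noncomputable def gg (c p : ℝ) (k : ℕ) (x : ℝ) : ℝ :=
  if x ≤ 0 then 0 else FF c p k x

lemma FF_zero (c p x : ℝ) : FF c p 0 x = Real.exp (-c * x ^ (-p)) := by
  simp [FF, aa]

lemma sum_step (c p : ℝ) (k : ℕ) {x : ℝ} (hx : 0 < x) :
    ∑ j ∈ Finset.range (k+2), aa p (k+1) j * c^j * x ^ (-((j:ℝ)*p)-((k:ℝ)+1))
    = ∑ j ∈ Finset.range (k+1),
        (aa p k j * c^j * ((-((j:ℝ)*p)-(k:ℝ)) * x ^ (-((j:ℝ)*p)-(k:ℝ)-1))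
          + aa p k j * c^j * x ^ (-((j:ℝ)*p)-(k:ℝ)) * (Real.exp (-c * x ^ (-p)) * (c*p*x^(-p-1))) / Real.exp (-c * x ^ (-p))) := by
  have hexp : Real.exp (-c * x ^ (-p)) ≠ 0 := (Real.exp_pos _).ne'
  -- simplify the exp factor away pointwise
  have hRHS : ∀ j : ℕ,
      aa p k j * c^j * ((-((j:ℝ)*p)-(k:ℝ)) * x ^ (-((j:ℝ)*p)-(k:ℝ)-1))
        + aa p k j * c^j * x ^ (-((j:ℝ)*p)-(k:ℝ)) * (Real.exp (-c * x ^ (-p)) * (c*p*x^(-p-1))) / Real.exp (-c * x ^ (-p))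
      = (-((j:ℝ)*p)-(k:ℝ)) * aa p k j * c^j * x ^ (-((j:ℝ)*p)-((k:ℝ)+1))
        + p * aa p k j * c^(j+1) * x ^ (-(((j:ℝ)+1)*p)-((k:ℝ)+1)) := by
    intro j
    have h1 : x ^ (-((j:ℝ)*p)-(k:ℝ)) * x ^ (-p-1) = x ^ (-(((j:ℝ)+1)*p)-((k:ℝ)+1)) := by
      rw [← Real.rpow_add hx]; congr 1; ring
    have h2 : (-((j:ℝ)*p)-(k:ℝ)-1) = (-((j:ℝ)*p)-((k:ℝ)+1)) := by ring
    rw [h2]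
    field_simp
    rw [show -(p*((j:ℝ)+1)) = -(((j:ℝ)+1)*p) by ring, ← h1]; ring
  rw [Finset.sum_congr rfl fun j _ => hRHS j, Finset.sum_add_distrib]
  -- LHS decomposition
  set U : ℕ → ℝ := fun j => (-((j:ℝ)*p)-(k:ℝ)) * aa p k j * c^j * x ^ (-((j:ℝ)*p)-((k:ℝ)+1)) with hU
  set V : ℕ → ℝ := fun j =>
    if j = 0 then 0 else p * aa p k (j-1) * c^j * x ^ (-((j:ℝ)*p)-((k:ℝ)+1)) with hV
  have hTU : ∀ j : ℕ, aa p (k+1) j * c^j * x ^ (-((j:ℝ)*p)-((k:ℝ)+1)) = U j + V j := by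
    intro j
    match j with
    | 0 => simp only [hU, hV, aa]; push_cast; ring
    | i+1 =>
      simp only [hU, hV, aa, if_neg (Nat.succ_ne_zero i), Nat.add_sub_cancel]
      push_cast; ring
  rw [Finset.sum_congr rfl fun j _ => hTU j, Finset.sum_add_distrib]
  congr 1
  · rw [Finset.sum_range_succ]
    have : U (k+1) = 0 := by
      simp only [hU]
      rw [aa_eq_zero p k (k+1) (by omega)]; ring
    rw [this, add_zero]
  · rw [Finset.sum_range_succ']
    simp only [hV, if_pos rfl, add_zero]
    refine Finset.sum_congr rfl fun i _ => ?_
    simp only [if_neg (Nat.succ_ne_zero i), Nat.add_sub_cancel]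
    push_cast; ring

lemma hasDerivAt_FF (c p : ℝ) (k : ℕ) {x : ℝ} (hx : 0 < x) :
    HasDerivAt (FF c p k) (FF c p (k+1) x) x := by
  have hxne := hx.ne'
  have hE : HasDerivAt (fun x : ℝ => Real.exp (-c * x ^ (-p)))
      (Real.exp (-c * x ^ (-p)) * (c * p * x ^ (-p - 1))) x := by
    have h1 : HasDerivAt (fun x : ℝ => x ^ (-p)) (-p * x ^ (-p - 1)) x :=
      Real.hasDerivAt_rpow_const (Or.inl hxne)
    have := (h1.const_mul (-c)).exp
    convert this using 1; ring
  have hS : HasDerivAt (fun x : ℝ => ∑ j ∈ Finset.range (k+1), aa p k j * c^j * x ^ (-((j:ℝ)*p)-(k:ℝ)))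
      (∑ j ∈ Finset.range (k+1), aa p k j * c^j * ((-((j:ℝ)*p)-(k:ℝ)) * x ^ (-((j:ℝ)*p)-(k:ℝ)-1))) x := by
    apply HasDerivAt.fun_sum
    intro j _
    exact (Real.hasDerivAt_rpow_const (Or.inl hxne)).const_mul _
  have H := hS.fun_mul hE
  have hfun : FF c p k = fun x : ℝ =>
      (∑ j ∈ Finset.range (k+1), aa p k j * c^j * x ^ (-((j:ℝ)*p)-(k:ℝ))) * Real.exp (-c * x ^ (-p)) := rfl
  rw [hfun]
  refine H.congr_deriv ?_
  symm
  have hexp : Real.exp (-c * x ^ (-p)) ≠ 0 := (Real.exp_pos _).ne'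
  have key := sum_step c p k hx
  have : FF c p (k+1) x
      = (∑ j ∈ Finset.range (k+2), aa p (k+1) j * c^j * x ^ (-((j:ℝ)*p)-((k:ℝ)+1))) * Real.exp (-c * x ^ (-p)) := by
    simp only [FF]
    norm_num
  rw [this, key, Finset.sum_add_distrib, add_mul]
  congr 1
  rw [Finset.sum_mul, Finset.sum_mul]
  exact Finset.sum_congr rfl fun j _ => div_mul_cancel₀ _ hexp

lemma tendsto_rpow_exp {c p : ℝ} (hc : 0 < c) (hp : 0 < p) (s : ℝ) :
    Tendsto (fun t : ℝ => t ^ s * Real.exp (-c * t ^ (-p))) (nhdsWithin (0:ℝ) (Set.Ioi 0)) (nhds 0) := by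
  have h1 : Tendsto (fun y : ℝ => y ^ (-s/p) * Real.exp (-c*y)) atTop (nhds 0) :=
    tendsto_rpow_mul_exp_neg_mul_atTop_nhds_zero _ c hc
  have h2 : Tendsto (fun x : ℝ => x ^ p) atTop atTop := tendsto_rpow_atTop hp
  have h4 : Tendsto (fun x : ℝ => x ^ (-s) * Real.exp (-c * x ^ p)) atTop (nhds 0) := by
    refine (h1.comp h2).congr' ?_
    filter_upwards [eventually_gt_atTop (0:ℝ)] with x hx
    simp only [Function.comp]
    rw [← Real.rpow_mul hx.le]
    congr 2
    field_simp
  have h5 : Tendsto (fun t : ℝ => t⁻¹) (nhdsWithin (0:ℝ) (Set.Ioi 0)) atTop :=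
    tendsto_inv_nhdsGT_zero
  refine (h4.comp h5).congr' ?_
  filter_upwards [self_mem_nhdsWithin] with t (ht : t ∈ Set.Ioi 0)
  have ht0 : (0:ℝ) < t := ht
  simp only [Function.comp]
  rw [Real.inv_rpow ht0.le, ← Real.rpow_neg ht0.le, neg_neg,
    Real.inv_rpow ht0.le, ← Real.rpow_neg ht0.le]

lemma tendsto_FF_div {c p : ℝ} (hc : 0 < c) (hp : 0 < p) (k : ℕ) :
    Tendsto (fun t : ℝ => FF c p k t / t) (nhdsWithin (0:ℝ) (Set.Ioi 0)) (nhds 0) := by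
  have main : Tendsto (fun t : ℝ => ∑ j ∈ Finset.range (k+1),
      aa p k j * c^j * (t ^ (-((j:ℝ)*p)-(k:ℝ)-1) * Real.exp (-c * t ^ (-p))))
      (nhdsWithin (0:ℝ) (Set.Ioi 0)) (nhds 0) := by
    have := tendsto_finset_sum (Finset.range (k+1))
      (fun j _ => ((tendsto_rpow_exp hc hp (-((j:ℝ)*p)-(k:ℝ)-1)).const_mul (aa p k j * c^j)))
    simpa using this
  refine main.congr' ?_
  filter_upwards [self_mem_nhdsWithin] with t (ht : t ∈ Set.Ioi 0)
  have ht0 : (0:ℝ) < t := ht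
  simp only [FF, Finset.sum_mul, Finset.sum_div]
  refine Finset.sum_congr rfl fun j _ => ?_
  have hre : t ^ (-((j:ℝ)*p)-(k:ℝ)-1) = t ^ (-((j:ℝ)*p)-(k:ℝ)) / t := by
    rw [← Real.rpow_sub_one ht0.ne']
  rw [hre]; ring

lemma hasDerivAt_gg {c p : ℝ} (hc : 0 < c) (hp : 0 < p) (k : ℕ) (x : ℝ) :
    HasDerivAt (gg c p k) (gg c p (k+1) x) x := by
  rcases lt_trichotomy x 0 with hx | hx | hx
  · have hz : gg c p (k+1) x = 0 := if_pos hx.le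
    rw [hz]
    have hev : gg c p k =ᶠ[nhds x] fun _ => (0:ℝ) := by
      filter_upwards [Iio_mem_nhds hx] with t (ht : t < 0)
      exact if_pos ht.le
    exact (hasDerivAt_const x (0:ℝ)).congr_of_eventuallyEq hev
  · subst hx
    have hz : gg c p (k+1) 0 = 0 := if_pos le_rfl
    rw [hz]
    rw [hasDerivAt_iff_tendsto_slope]
    have hsplit : nhdsWithin (0:ℝ) {(0:ℝ)}ᶜ
        = nhdsWithin (0:ℝ) (Set.Iio 0) ⊔ nhdsWithin (0:ℝ) (Set.Ioi 0) :=
      (nhdsLT_sup_nhdsGT (0:ℝ)).symm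
    rw [hsplit, tendsto_sup]
    constructor
    · refine tendsto_const_nhds.congr' ?_
      filter_upwards [self_mem_nhdsWithin] with t (ht : t ∈ Set.Iio 0)
      have ht' : t ≤ 0 := le_of_lt ht
      simp [slope_def_field, gg, ht']
    · refine (tendsto_FF_div hc hp k).congr' ?_
      filter_upwards [self_mem_nhdsWithin] with t (ht : t ∈ Set.Ioi 0)
      have ht0 : (0:ℝ) < t := ht
      have h1 : gg c p k t = FF c p k t := if_neg (not_le.2 ht0)
      have h2 : gg c p k 0 = 0 := if_pos le_rfl
      simp [slope_def_field, h1, h2]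
  · have hz : gg c p (k+1) x = FF c p (k+1) x := if_neg (not_le.2 hx)
    rw [hz]
    have hev : gg c p k =ᶠ[nhds x] FF c p k := by
      filter_upwards [Ioi_mem_nhds hx] with t (ht : 0 < t)
      exact if_neg (not_le.2 ht)
    exact (hasDerivAt_FF c p k hx).congr_of_eventuallyEq hev

lemma iteratedDeriv_gg {c p : ℝ} (hc : 0 < c) (hp : 0 < p) (k : ℕ) :
    iteratedDeriv k (gg c p 0) = gg c p k := by
  induction k with
  | zero => simp [iteratedDeriv_zero]
  | succ k ih =>
    rw [iteratedDeriv_succ, ih]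
    funext x
    exact (hasDerivAt_gg hc hp k x).deriv

lemma pow_le_fact_mul_exp {v : ℝ} (hv : 0 ≤ v) (j : ℕ) : v^j ≤ ((Nat.factorial j) : ℝ) * Real.exp v := by
  have h1 : v^j / ((Nat.factorial j) : ℝ) ≤ ∑ i ∈ Finset.range (j+1), v^i / ((Nat.factorial i) : ℝ) := by
    refine Finset.single_le_sum (f := fun i => v^i / ((Nat.factorial i) : ℝ)) (fun i _ => div_nonneg (pow_nonneg hv i) (Nat.cast_nonneg _)) ?_
    exact Finset.self_mem_range_succ j
  have h2 := Real.sum_le_exp_of_nonneg hv (j+1)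
  have h3 : v^j / ((Nat.factorial j) : ℝ) ≤ Real.exp v := le_trans h1 h2
  have hj : (0:ℝ) < ((Nat.factorial j) : ℝ) := Nat.cast_pos.2 (Nat.factorial_pos j)
  calc v^j = v^j / ((Nat.factorial j) : ℝ) * ((Nat.factorial j) : ℝ) := by field_simp
  _ ≤ Real.exp v * ((Nat.factorial j) : ℝ) := by exact mul_le_mul_of_nonneg_right h3 hj.le
  _ = ((Nat.factorial j) : ℝ) * Real.exp v := by ring

lemma pow_mul_exp_neg_le {v : ℝ} (hv : 0 ≤ v) (j : ℕ) : v^j * Real.exp (-v) ≤ ((Nat.factorial j) : ℝ) := by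
  have h := mul_le_mul_of_nonneg_right (pow_le_fact_mul_exp hv j) (Real.exp_pos (-v)).le
  calc v^j * Real.exp (-v) ≤ ((Nat.factorial j) : ℝ) * Real.exp v * Real.exp (-v) := h
  _ = ((Nat.factorial j) : ℝ) := by rw [mul_assoc, ← Real.exp_add]; simp

lemma rpow_mul_exp_neg_le {q w : ℝ} (hq : 0 ≤ q) (hw : 0 < w) :
    w ^ q * Real.exp (-w) ≤ q ^ q * Real.exp (-q) := by
  rcases eq_or_lt_of_le hq with h | h
  · subst h
    simp only [Real.rpow_zero, one_mul, neg_zero, Real.exp_zero, mul_one]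
    exact Real.exp_le_one_iff.2 (by linarith)
  · rw [Real.rpow_def_of_pos hw, Real.rpow_def_of_pos h, ← Real.exp_add, ← Real.exp_add,
      Real.exp_le_exp]
    have hlog : Real.log (w/q) ≤ w/q - 1 := Real.log_le_sub_one_of_pos (div_pos hw h)
    rw [Real.log_div hw.ne' h.ne'] at hlog
    have := mul_le_mul_of_nonneg_left hlog h.le
    have hq' : q * (w/q - 1) = w - q := by field_simp
    nlinarith

noncomputable def AA (p : ℝ) (k : ℕ) : ℝ := ∑ j ∈ Finset.range (k+1), |aa p k j| * 2^j * ((Nat.factorial j) : ℝ)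

lemma AA_nonneg (p : ℝ) (k : ℕ) : 0 ≤ AA p k :=
  Finset.sum_nonneg fun j _ => by positivity

lemma AA_le {p : ℝ} (hp : 0 < p) (k : ℕ) : AA p k ≤ (3*p+1)^k * ((Nat.factorial k) : ℝ) := by
  induction k with
  | zero => simp [AA, aa]
  | succ k ih =>
    have habs : ∀ j, j ≤ k+1 → |aa p (k+1) j| ≤
        ((k:ℝ)+1)*(p+1) * |aa p k j| + p * (if j = 0 then 0 else |aa p k (j-1)|) := by
      intro j hj
      match j with
      | 0 =>
        simp only [aa, reduceIte, mul_zero, add_zero, abs_mul, abs_neg]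
        rw [abs_of_nonneg (Nat.cast_nonneg k)]
        have h0 : (0:ℝ) ≤ |aa p k 0| := abs_nonneg _
        nlinarith [mul_nonneg (mul_nonneg (Nat.cast_nonneg k : (0:ℝ) ≤ (k:ℝ)) hp.le) h0, mul_nonneg hp.le h0]
      | i+1 =>
        simp only [aa, if_neg (Nat.succ_ne_zero i), Nat.add_sub_cancel]
        have h1 : |(-((((i:ℕ)+1:ℝ)) * p + k)) * aa p k (i+1) + p * aa p k i|
            ≤ ((((i:ℕ)+1:ℝ)) * p + k) * |aa p k (i+1)| + p * |aa p k i| := by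
          calc _ ≤ |(-((((i:ℕ)+1:ℝ)) * p + k)) * aa p k (i+1)| + |p * aa p k i| := abs_add_le _ _
          _ = ((((i:ℕ)+1:ℝ)) * p + k) * |aa p k (i+1)| + p * |aa p k i| := by
            rw [abs_mul, abs_mul, abs_neg, abs_of_nonneg (by positivity), abs_of_nonneg hp.le]
        refine h1.trans ?_
        have hik : ((i:ℝ)+1) ≤ (k:ℝ)+1 := by
          have : i + 1 ≤ k + 1 := hj
          exact_mod_cast this
        have : ((((i:ℕ)+1:ℝ)) * p + k) ≤ ((k:ℝ)+1)*(p+1) := by push_cast; nlinarith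
        have habs2 : (0:ℝ) ≤ |aa p k (i+1)| := abs_nonneg _
        nlinarith
    have hstep : AA p (k+1) ≤ ((k:ℝ)+1) * (3*p+1) * AA p k := by
      have h1 : AA p (k+1) ≤ ∑ j ∈ Finset.range (k+2),
          (((k:ℝ)+1)*(p+1) * |aa p k j| + p * (if j = 0 then 0 else |aa p k (j-1)|)) * 2^j * ((Nat.factorial j) : ℝ) := by
        refine Finset.sum_le_sum fun j hj => ?_
        have hj' : j ≤ k+1 := by have := Finset.mem_range.1 hj; omega
        have := habs j hj'
        have h2 : (0:ℝ) ≤ 2^j * ((Nat.factorial j) : ℝ) := by positivity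
        calc |aa p (k+1) j| * 2^j * ((Nat.factorial j) : ℝ) = |aa p (k+1) j| * (2^j * ((Nat.factorial j) : ℝ)) := by ring
        _ ≤ (((k:ℝ)+1)*(p+1) * |aa p k j| + p * (if j = 0 then 0 else |aa p k (j-1)|)) * (2^j * ((Nat.factorial j) : ℝ)) :=
          mul_le_mul_of_nonneg_right this h2
        _ = _ := by ring
      rw [Finset.sum_congr rfl (fun j _ => by ring :
        ∀ j ∈ Finset.range (k+2),
          (((k:ℝ)+1)*(p+1) * |aa p k j| + p * (if j = 0 then 0 else |aa p k (j-1)|)) * 2^j * ((Nat.factorial j) : ℝ)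
          = ((k:ℝ)+1)*(p+1) * (|aa p k j| * 2^j * ((Nat.factorial j) : ℝ))
            + p * ((if j = 0 then 0 else |aa p k (j-1)|) * 2^j * ((Nat.factorial j) : ℝ))), Finset.sum_add_distrib,
        ← Finset.mul_sum, ← Finset.mul_sum] at h1
      have hA1 : ∑ j ∈ Finset.range (k+2), |aa p k j| * 2^j * ((Nat.factorial j) : ℝ) = AA p k := by
        rw [Finset.sum_range_succ]
        rw [aa_eq_zero p k (k+1) (by omega)]
        simp [AA]
      have hA2 : ∑ j ∈ Finset.range (k+2), (if j = 0 then 0 else |aa p k (j-1)|) * 2^j * ((Nat.factorial j) : ℝ)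
          ≤ 2*((k:ℝ)+1) * AA p k := by
        rw [Finset.sum_range_succ']
        simp only [reduceIte, if_neg (Nat.succ_ne_zero _), Nat.add_sub_cancel, zero_mul, add_zero]
        rw [show (2:ℝ)*((k:ℝ)+1) * AA p k = ∑ i ∈ Finset.range (k+1), 2*((k:ℝ)+1) * (|aa p k i| * 2^i * ((Nat.factorial i) : ℝ)) from by rw [← Finset.mul_sum, AA]]
        apply Finset.sum_le_sum
        intro i hi
        have hi' : i < k+1 := Finset.mem_range.1 hi
        have hfact : ((Nat.factorial (i+1)) : ℝ) = ((i:ℝ)+1) * ((Nat.factorial i) : ℝ) := by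
          rw [Nat.factorial_succ]; push_cast; ring
        have hle : ((i:ℝ)+1) ≤ (k:ℝ)+1 := by
          have : i+1 ≤ k+1 := hi'
          exact_mod_cast this
        have h2 : (0:ℝ) ≤ |aa p k i| * 2^i * ((Nat.factorial i) : ℝ) := by positivity
        calc |aa p k i| * 2^(i+1) * ((Nat.factorial (i+1)) : ℝ)
            = ((i:ℝ)+1) * (2 * (|aa p k i| * 2^i * ((Nat.factorial i) : ℝ))) := by
              rw [hfact]; ring
          _ ≤ ((k:ℝ)+1) * (2 * (|aa p k i| * 2^i * ((Nat.factorial i) : ℝ))) := by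
              nlinarith [mul_nonneg (sub_nonneg.2 hle) h2]
          _ = 2*((k:ℝ)+1) * (|aa p k i| * 2^i * ((Nat.factorial i) : ℝ)) := by ring
      rw [hA1] at h1
      have := add_le_add_left (mul_le_mul_of_nonneg_left hA2 hp.le) (((k:ℝ)+1)*(p+1) * AA p k)
      have hAnn := AA_nonneg p k
      nlinarith
    calc AA p (k+1)
        ≤ ((k:ℝ)+1) * (3*p+1) * AA p k := hstep
      _ ≤ ((k:ℝ)+1) * (3*p+1) * ((3*p+1)^k * ((Nat.factorial k) : ℝ)) := by
          have h3 : (0:ℝ) ≤ ((k:ℝ)+1) * (3*p+1) := by positivity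
          exact mul_le_mul_of_nonneg_left ih h3
      _ = (3*p+1)^(k+1) * ((Nat.factorial (k+1)) : ℝ) := by
          rw [Nat.factorial_succ]; push_cast; ring

noncomputable def MM (c p : ℝ) (k : ℕ) : ℝ := (2*(k:ℝ)/(c*p*Real.exp 1)) ^ ((k:ℝ)/p)

lemma MM_nonneg {c p : ℝ} (hc : 0 < c) (hp : 0 < p) (k : ℕ) : 0 ≤ MM c p k :=
  Real.rpow_nonneg (by positivity) _

lemma FF_le {c p : ℝ} (hc : 0 < c) (hp : 0 < p) (k : ℕ) {x : ℝ} (hx : 0 < x) :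
    |FF c p k x| ≤ AA p k * MM c p k := by
  set u := x ^ (-p) with hu
  have hu0 : 0 < u := Real.rpow_pos_of_pos hx _
  have hw0 : 0 < c/2*u := by positivity
  have hsplit : Real.exp (-c * u) = Real.exp (-(c/2*u)) * Real.exp (-(c/2*u)) := by
    rw [← Real.exp_add]; congr 1; ring
  have bound1 : ∀ j : ℕ, c^j * x ^ (-((j:ℝ)*p)) * Real.exp (-(c/2*u)) ≤ 2^j * ((Nat.factorial j) : ℝ) := by
    intro j
    have hxp : x ^ (-((j:ℝ)*p)) = u^j := by
      rw [show -((j:ℝ)*p) = (-p)*(j:ℝ) by ring, Real.rpow_mul hx.le, Real.rpow_natCast]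
    rw [hxp]
    have h1 : c^j * u^j = 2^j * (c/2*u)^j := by
      rw [← mul_pow, ← mul_pow]; congr 1; ring
    rw [h1, mul_assoc]
    exact mul_le_mul_of_nonneg_left (pow_mul_exp_neg_le hw0.le j) (by positivity)
  have bound2 : x ^ (-(k:ℝ)) * Real.exp (-(c/2*u)) ≤ MM c p k := by
    set q := (k:ℝ)/p with hqdef
    have hq0 : (0:ℝ) ≤ q := by positivity
    have hxk : x ^ (-(k:ℝ)) = u ^ q := by
      rw [show -(k:ℝ) = (-p)*q by rw [hqdef]; field_simp; try ring, Real.rpow_mul hx.le]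
    have huq : u ^ q = (2/c)^q * (c/2*u)^q := by
      rw [← Real.mul_rpow (by positivity) (by positivity)]
      congr 1; field_simp; try ring
    have hMM : MM c p k = (2/c)^q * (q^q * Real.exp (-q)) := by
      have hbase : 2*(k:ℝ)/(c*p*Real.exp 1) = (2/c) * q * (Real.exp 1)⁻¹ := by
        rw [hqdef]; field_simp; try ring
      rw [MM, hbase, Real.mul_rpow (by positivity) (by positivity),
        Real.mul_rpow (by positivity) (by positivity),
        Real.inv_rpow (Real.exp_pos 1).le, Real.exp_one_rpow, ← Real.exp_neg]
      ring
    rw [hxk, huq, hMM, mul_assoc]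
    refine mul_le_mul_of_nonneg_left ?_ (Real.rpow_nonneg (by positivity) _)
    exact rpow_mul_exp_neg_le hq0 hw0
  have habs : |FF c p k x| ≤ (∑ j ∈ Finset.range (k+1), |aa p k j| * c^j * x ^ (-((j:ℝ)*p) - k)) * Real.exp (-c * u) := by
    rw [FF, abs_mul, abs_of_pos (Real.exp_pos _)]
    refine mul_le_mul_of_nonneg_right ?_ (Real.exp_pos _).le
    refine (Finset.abs_sum_le_sum_abs _ _).trans ?_
    refine Finset.sum_le_sum fun j _ => ?_
    rw [abs_mul, abs_mul, abs_of_pos (by positivity : (0:ℝ) < c^j),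
      abs_of_pos (Real.rpow_pos_of_pos hx _)]
  refine habs.trans ?_
  have hterm : ∀ j ∈ Finset.range (k+1),
      |aa p k j| * c^j * x ^ (-((j:ℝ)*p) - k) * Real.exp (-c * u)
      = |aa p k j| * ((c^j * x ^ (-((j:ℝ)*p)) * Real.exp (-(c/2*u))) * (x ^ (-(k:ℝ)) * Real.exp (-(c/2*u)))) := by
    intro j _
    rw [show (-((j:ℝ)*p) - k) = (-((j:ℝ)*p)) + (-(k:ℝ)) by ring, Real.rpow_add hx, hsplit]
    ring
  rw [Finset.sum_mul, Finset.sum_congr rfl hterm]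
  have hstep : ∀ j ∈ Finset.range (k+1),
      |aa p k j| * ((c^j * x ^ (-((j:ℝ)*p)) * Real.exp (-(c/2*u))) * (x ^ (-(k:ℝ)) * Real.exp (-(c/2*u))))
      ≤ |aa p k j| * 2^j * ((Nat.factorial j) : ℝ) * MM c p k := by
    intro j _
    have h2 : (0:ℝ) ≤ x ^ (-(k:ℝ)) * Real.exp (-(c/2*u)) :=
      mul_nonneg (Real.rpow_nonneg hx.le _) (Real.exp_pos _).le
    have h3 : (0:ℝ) ≤ 2^j * ((Nat.factorial j) : ℝ) := by positivity
    have h4 := mul_le_mul (bound1 j) bound2 h2 h3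
    calc |aa p k j| * ((c^j * x ^ (-((j:ℝ)*p)) * Real.exp (-(c/2*u))) * (x ^ (-(k:ℝ)) * Real.exp (-(c/2*u))))
        ≤ |aa p k j| * (2^j * ((Nat.factorial j) : ℝ) * MM c p k) :=
          mul_le_mul_of_nonneg_left h4 (abs_nonneg _)
      _ = |aa p k j| * 2^j * ((Nat.factorial j) : ℝ) * MM c p k := by ring
  refine (Finset.sum_le_sum hstep).trans ?_
  rw [AA, Finset.sum_mul]

lemma gg_le {c p : ℝ} (hc : 0 < c) (hp : 0 < p) (k : ℕ) (x : ℝ) :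
    |gg c p k x| ≤ AA p k * MM c p k := by
  rcases le_or_gt x 0 with hx | hx
  · rw [gg, if_pos hx, abs_zero]
    exact mul_nonneg (AA_nonneg p k) (MM_nonneg hc hp k)
  · rw [gg, if_neg (not_le.2 hx)]
    exact FF_le hc hp k hx

lemma rpow_nat_comm {x : ℝ} (hx : 0 ≤ x) (y : ℝ) (n : ℕ) : (x^y)^n = (x^n)^y := by
  rw [← Real.rpow_natCast (x^y) n, ← Real.rpow_mul hx, mul_comm, Real.rpow_mul hx,
    Real.rpow_natCast]

lemma key_term_le {α L c p : ℝ} (hα : 1 < α) (hL : 0 < L) (hc : 0 < c) (hp : 0 < p)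
    (hpα : 1/p = α - 1) (k : ℕ) :
    L ^ ((k:ℝ)*α) / ((Nat.factorial k : ℝ)) ^ α * (AA p k * MM c p k)
      ≤ (L^α * (3*p+1) * (2/(c*p))^(α-1)) ^ k := by
  have hα1 : (0:ℝ) ≤ α - 1 := by linarith
  cases k with
  | zero =>
    simp only [Nat.cast_zero, zero_mul, Real.rpow_zero, Nat.factorial_zero, Nat.cast_one,
      Real.one_rpow, div_one, one_mul, pow_zero]
    have hAA : AA p 0 = 1 := by simp [AA, aa]
    have hMM : MM c p 0 = 1 := by
      rw [MM]; norm_num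
    rw [hAA, hMM]; norm_num
  | succ m =>
    set K : ℝ := ((m+1:ℕ):ℝ) with hK
    have hK0 : (0:ℝ) < K := by rw [hK]; exact_mod_cast Nat.succ_pos m
    set f : ℝ := ((Nat.factorial (m+1) : ℕ):ℝ) with hf
    have hf0 : (0:ℝ) < f := by rw [hf]; exact_mod_cast Nat.factorial_pos (m+1)
    set e1 : ℝ := Real.exp 1 with he1def
    have he1 : (0:ℝ) < e1 := Real.exp_pos 1
    set D : ℝ := (2/(c*p))^(α-1) with hD
    set C : ℝ := 3*p+1 with hC
    have hC0 : (0:ℝ) < C := by rw [hC]; linarith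
    set Ee : ℝ := e1^(α-1) with hEe
    set Ei : ℝ := (e1⁻¹)^(α-1) with hEi
    have hD0 : (0:ℝ) ≤ D := Real.rpow_nonneg (by positivity) _
    have hEe0 : (0:ℝ) ≤ Ee := Real.rpow_nonneg he1.le _
    have hEi0 : (0:ℝ) ≤ Ei := Real.rpow_nonneg (by positivity) _
    -- step 1 : rewrite MM
    have h1 : MM c p (m+1) = D^(m+1) * ((K^(α-1))^(m+1)) * Ei^(m+1) := by
      rw [MM]
      have hexp : K/p = (α-1)*K := by
        rw [div_eq_mul_inv, ← one_div, hpα]; ring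
      have hbase : 2*K/(c*p*e1) = (2/(c*p)) * K * e1⁻¹ := by field_simp; try ring
      rw [hexp, hbase, Real.rpow_mul (by positivity), Real.rpow_natCast,
        Real.mul_rpow (by positivity) (by positivity),
        Real.mul_rpow (by positivity) (by positivity)]
      try rw [mul_pow]
      try rw [mul_pow]
    -- step 2 : k^k ≤ k! e^k
    have h2 : (K^(α-1))^(m+1) ≤ f^(α-1) * Ee^(m+1) := by
      have hkk : K^(m+1) ≤ f * e1^(m+1) := by
        have h := pow_le_fact_mul_exp hK0.le (m+1)
        have hexpK : Real.exp K = e1^(m+1) := by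
          rw [he1def, ← Real.exp_nat_mul, mul_one, hK]
        rw [← hexpK]; exact_mod_cast h
      calc (K^(α-1))^(m+1) = (K^(m+1))^(α-1) := rpow_nat_comm hK0.le _ _
        _ ≤ (f * e1^(m+1))^(α-1) := Real.rpow_le_rpow (by positivity) hkk hα1
        _ = f^(α-1) * Ee^(m+1) := by
            rw [Real.mul_rpow hf0.le (by positivity), hEe, rpow_nat_comm he1.le]
    have hMMle : MM c p (m+1) ≤ D^(m+1) * (f^(α-1) * Ee^(m+1)) * Ei^(m+1) := by
      rw [h1]
      have := mul_le_mul_of_nonneg_left h2 (pow_nonneg hD0 (m+1))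
      have := mul_le_mul_of_nonneg_right this (pow_nonneg hEi0 (m+1))
      exact this
    have hAAle : AA p (m+1) ≤ C^(m+1) * f := AA_le hp (m+1)
    have hprod : AA p (m+1) * MM c p (m+1)
        ≤ (C^(m+1) * f) * (D^(m+1) * (f^(α-1) * Ee^(m+1)) * Ei^(m+1)) := by
      refine mul_le_mul hAAle hMMle (MM_nonneg hc hp _) ?_
      exact mul_nonneg (pow_nonneg hC0.le _) hf0.le
    have hfront : (0:ℝ) ≤ L ^ (K*α) / f^α :=
      div_nonneg (Real.rpow_nonneg hL.le _) (Real.rpow_nonneg hf0.le _)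
    have hL1 : L ^ (K*α) = (L^α)^(m+1) := by
      rw [mul_comm, Real.rpow_mul hL.le, Real.rpow_natCast]
    have hEeEi : Ee * Ei = 1 := by
      rw [hEe, hEi, ← Real.mul_rpow he1.le (by positivity), mul_inv_cancel₀ he1.ne',
        Real.one_rpow]
    have hff : f * f^(α-1) = f^α := by
      nth_rewrite 2 [show α = 1 + (α-1) by ring]
      rw [Real.rpow_add hf0, Real.rpow_one]
    have hfα0 : (0:ℝ) < f^α := Real.rpow_pos_of_pos hf0 α
    calc L ^ (K*α) / f^α * (AA p (m+1) * MM c p (m+1))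
        ≤ L ^ (K*α) / f^α * ((C^(m+1) * f) * (D^(m+1) * (f^(α-1) * Ee^(m+1)) * Ei^(m+1))) :=
          mul_le_mul_of_nonneg_left hprod hfront
      _ = ((L^α)^(m+1) * C^(m+1) * D^(m+1)) * ((Ee^(m+1) * Ei^(m+1)) * ((f * f^(α-1)) / f^α)) := by
          rw [hL1]; ring
      _ = ((L^α)^(m+1) * C^(m+1) * D^(m+1)) * ((Ee*Ei)^(m+1) * (f^α / f^α)) := by
          rw [hff, mul_pow Ee Ei (m+1)]
      _ = (L^α * C * D) ^ (m+1) := by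
          rw [hEeEi, div_self hfα0.ne', one_pow, one_mul, mul_one, mul_pow, mul_pow]

end GevreyAux


open GevreyAux in
/-- for every `α > 1` and `L > 0` there is `λ > 0` such that the Gevrey norm
`Σ_k (L^{kα}/(k!)^α)·sup_{x∈ℝ}|f_λ^{(k)}(x)|` of the function `f_λ`
(`0` for `x ≤ 0`, `exp(-λ√2·x^{-1/(α-1)})` for `x > 0`) is finite. -/
theorem f_lambda_gevrey (α L : ℝ) (hα : 1 < α) (hL : 0 < L) :
    ∃ lam : ℝ, 0 < lam ∧
      (∑' k : ℕ, ENNReal.ofReal (L ^ ((k : ℝ) * α) / (k.factorial : ℝ) ^ α) *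
        ⨆ x : ℝ, ENNReal.ofReal
          |iteratedDeriv k (fun t : ℝ =>
            if t ≤ 0 then 0 else Real.exp (-(lam * Real.sqrt 2) * t ^ (-(1 / (α - 1))))) x|)
        < ⊤ := by
  have hα1 : (0:ℝ) < α - 1 := by linarith
  set p : ℝ := 1/(α-1) with hpdef
  have hp : 0 < p := by rw [hpdef]; positivity
  have hpα : 1/p = α - 1 := by rw [hpdef, one_div_one_div]
  set X : ℝ := L^α * (3*p+1) with hX
  have hX0 : 0 < X := mul_pos (Real.rpow_pos_of_pos hL α) (by linarith)
  have hXp0 : 0 < X^p := Real.rpow_pos_of_pos hX0 p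
  have hs2 : (0:ℝ) < Real.sqrt 2 := Real.sqrt_pos.2 (by norm_num)
  have hnum : (0:ℝ) < 2*(X^p)/p + 1 := by positivity
  refine ⟨(2*(X^p)/p + 1)/Real.sqrt 2, div_pos hnum hs2, ?_⟩
  set lam : ℝ := (2*(X^p)/p + 1)/Real.sqrt 2 with hlamdef
  set c : ℝ := lam * Real.sqrt 2 with hcdef
  have hc_eq : c = 2*(X^p)/p + 1 := by
    rw [hcdef, hlamdef, div_mul_cancel₀ _ hs2.ne']
  have hc : 0 < c := by rw [hc_eq]; positivity
  have hfeq : (fun t : ℝ => if t ≤ 0 then (0:ℝ)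
      else Real.exp (-c * t ^ (-p))) = gg c p 0 := by
    funext t
    by_cases ht : t ≤ 0 <;> simp [gg, FF_zero, ht]
  rw [hfeq]
  simp only [iteratedDeriv_gg hc hp]
  set r : ℝ := X * (2/(c*p))^(α-1) with hrdef
  have hr0 : 0 ≤ r := mul_nonneg hX0.le (Real.rpow_nonneg (by positivity) _)
  have hr1 : r < 1 := by
    have hcp2 : c*p/2 = X^p + p/2 := by rw [hc_eq]; field_simp
    have hcp0 : (0:ℝ) < c*p/2 := by positivity
    have hlt : X^p < c*p/2 := by rw [hcp2]; linarith
    have hX_eq : (X^p)^(α-1) = X := by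
      rw [← Real.rpow_mul hX0.le]
      have hone : p*(α-1) = 1 := by
        rw [← hpα]; field_simp
      rw [hone, Real.rpow_one]
    have h2 : X < (c*p/2)^(α-1) := by
      calc X = (X^p)^(α-1) := hX_eq.symm
        _ < (c*p/2)^(α-1) := Real.rpow_lt_rpow hXp0.le hlt hα1
    have hD_eq : ((2:ℝ)/(c*p))^(α-1) = ((c*p/2)^(α-1))⁻¹ := by
      rw [show (2:ℝ)/(c*p) = (c*p/2)⁻¹ by rw [inv_div], Real.inv_rpow hcp0.le]
    rw [hrdef, hD_eq, ← div_eq_mul_inv]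
    exact (div_lt_one (lt_trans hX0 h2)).2 h2
  calc (∑' k : ℕ, ENNReal.ofReal (L ^ ((k : ℝ) * α) / (k.factorial : ℝ) ^ α) *
        ⨆ x : ℝ, ENNReal.ofReal |gg c p k x|)
      ≤ ∑' k : ℕ, (ENNReal.ofReal r)^k := by
        refine ENNReal.tsum_le_tsum fun k => ?_
        have hT1 : (0:ℝ) ≤ L ^ ((k:ℝ)*α) / ((k.factorial : ℕ):ℝ)^α :=
          div_nonneg (Real.rpow_nonneg hL.le _) (Real.rpow_nonneg (Nat.cast_nonneg _) _)
        calc ENNReal.ofReal (L ^ ((k : ℝ) * α) / (k.factorial : ℝ) ^ α) *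
              ⨆ x : ℝ, ENNReal.ofReal |gg c p k x|
            ≤ ENNReal.ofReal (L ^ ((k : ℝ) * α) / (k.factorial : ℝ) ^ α) *
              ENNReal.ofReal (AA p k * MM c p k) :=
              mul_le_mul_right (iSup_le fun x => ENNReal.ofReal_le_ofReal (gg_le hc hp k x)) _
          _ = ENNReal.ofReal (L ^ ((k : ℝ) * α) / (k.factorial : ℝ) ^ α * (AA p k * MM c p k)) :=
              (ENNReal.ofReal_mul hT1).symm
          _ ≤ ENNReal.ofReal (r^k) :=
              ENNReal.ofReal_le_ofReal (key_term_le hα hL hc hp hpα k)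
          _ = (ENNReal.ofReal r)^k := ENNReal.ofReal_pow hr0 k
    _ = (1 - ENNReal.ofReal r)⁻¹ := ENNReal.tsum_geometric _
    _ < ⊤ := ENNReal.inv_lt_top.2 (tsub_pos_iff_lt.2 (ENNReal.ofReal_lt_one.2 hr1))
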